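/- For 1 < γ₁ < 2, λ ≥ 0, and t > 0, the identity (1/Γ(2-γ₁)) ∫₀^t (t-s)^{1-γ₁} ∫₀^s (s-τ)^{γ₁-2} E_{γ₁,γ₁-1}(-λ (s-τ)^{γ₁}) g(τ) dτ ds = ∫₀^t E_{γ₁,1}(-λ (t-s)^{γ₁}) g(s) ds holds for every continuous bounded function g : [0,∞) → ℝ. -/

import Mathlib

/-- The real two-parameter Mittag-Leffler function. -/
noncomputable def mlReal (α β : ℝ) (x : ℝ) : ℝ :=
  ∑' k : ℕ, x ^ k / Real.Gamma (α * k + β)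

open Real MeasureTheory intervalIntegral Set Filter

lemma mlSummable {γ β : ℝ} (hγ : 1 < γ) (hβ : 0 < β) (x : ℝ) :
    Summable (fun k : ℕ => x ^ k / Real.Gamma (γ * k + β)) := by
  have hΓpos : ∀ k : ℕ, 0 < Real.Gamma (γ * k + β) := by
    intro k
    apply Real.Gamma_pos_of_pos
    positivity
  rcases eq_or_ne x 0 with rfl | hx
  · apply summable_of_ne_finset_zero (s := {0})
    intro k hk
    simp only [Finset.mem_singleton] at hk
    rw [zero_pow hk]
    simp
  have hx' : 0 < |x| := abs_pos.mpr hx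
  apply summable_of_ratio_norm_eventually_le (r := 1/2) (by norm_num)
  filter_upwards [eventually_ge_atTop ⌈(2 * |x| + 2) / γ⌉₊] with k hk
  have hkγ : 2 * |x| + 2 ≤ γ * k := by
    have := Nat.ceil_le.mp hk
    calc 2 * |x| + 2 = ((2 * |x| + 2) / γ) * γ := by field_simp
    _ ≤ (k : ℝ) * γ := by
        apply mul_le_mul_of_nonneg_right this (by linarith)
    _ = γ * k := mul_comm _ _
  have h2 : (2:ℝ) ≤ γ * k + β := by nlinarith [abs_nonneg x]
  have hmono : Real.Gamma (γ * k + 1 + β) ≤ Real.Gamma (γ * (k+1) + β) := by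
    apply (Real.Gamma_strictMonoOn_Ici.monotoneOn) _ _ _
    · exact mem_Ici.mpr (by linarith)
    · exact mem_Ici.mpr (by push_cast; nlinarith)
    · push_cast; nlinarith
  have hrec : Real.Gamma (γ * k + 1 + β) = (γ * k + β) * Real.Gamma (γ * k + β) := by
    have := Real.Gamma_add_one (s := γ * k + β) (by positivity)
    rw [← this]; ring_nf
  have key : |x| * Real.Gamma (γ * k + β) ≤ (1/2) * Real.Gamma (γ * (k+1) + β) := by
    calc |x| * Real.Gamma (γ * k + β) ≤ ((γ * k + β)/2) * Real.Gamma (γ * k + β) := by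
          apply mul_le_mul_of_nonneg_right _ (hΓpos k).le
          nlinarith
      _ = (1/2) * Real.Gamma (γ * k + 1 + β) := by rw [hrec]; ring
      _ ≤ (1/2) * Real.Gamma (γ * (k+1) + β) := by linarith
  rw [norm_div, norm_div, norm_pow, norm_pow]
  rw [Real.norm_eq_abs, Real.norm_eq_abs, Real.norm_eq_abs,
    abs_of_pos (hΓpos (k+1)), abs_of_pos (hΓpos k)]
  rw [div_le_iff₀ (hΓpos (k+1)), pow_succ]
  have h1 : (1:ℝ)/2 * (|x| ^ k / Real.Gamma (γ * k + β)) * Real.Gamma (γ * (k+1) + β)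
      = |x| ^ k / Real.Gamma (γ * k + β) * ((1/2) * Real.Gamma (γ * (k+1) + β)) := by ring
  push_cast
  push_cast at key
  calc |x| ^ k * |x| ≤ |x| ^ k * (1/2 * Real.Gamma (γ * (k+1) + β) / Real.Gamma (γ*k+β)) := by
        apply mul_le_mul_of_nonneg_left _ (pow_nonneg (abs_nonneg x) k)
        rw [le_div_iff₀ (hΓpos k)]
        push_cast
        linarith [key]
    _ = 1/2 * (|x|^k / Real.Gamma (γ*k+β)) * Real.Gamma (γ*(k+1)+β) := by
        push_cast; ring

lemma mlReal_nonneg {γ β : ℝ} (hγ : 0 < γ) (hβ : 0 < β) {c : ℝ} (hc : 0 ≤ c) :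
    0 ≤ mlReal γ β c := by
  apply tsum_nonneg
  intro k
  have : 0 < Real.Gamma (γ * k + β) := Real.Gamma_pos_of_pos (by positivity)
  positivity

lemma mlReal_abs_le {γ β : ℝ} (hγ : 1 < γ) (hβ : 0 < β) {x c : ℝ} (hx : |x| ≤ c) :
    |mlReal γ β x| ≤ mlReal γ β c := by
  have hΓpos : ∀ k : ℕ, 0 < Real.Gamma (γ * k + β) := fun k =>
    Real.Gamma_pos_of_pos (by positivity)
  have hc : 0 ≤ c := le_trans (abs_nonneg x) hx
  have h1 : ∀ k : ℕ, ‖x ^ k / Real.Gamma (γ * k + β)‖ ≤ c ^ k / Real.Gamma (γ * k + β) := by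
    intro k
    rw [norm_div, Real.norm_eq_abs, Real.norm_eq_abs, abs_of_pos (hΓpos k), abs_pow]
    have := pow_le_pow_left₀ (abs_nonneg x) hx k
    gcongr
  calc |mlReal γ β x| ≤ ∑' k : ℕ, ‖x ^ k / Real.Gamma (γ * k + β)‖ := by
        rw [← Real.norm_eq_abs]
        apply norm_tsum_le_tsum_norm
        apply Summable.of_nonneg_of_le (fun k => norm_nonneg _) h1 (mlSummable hγ hβ c)
    _ ≤ ∑' k : ℕ, c ^ k / Real.Gamma (γ * k + β) := by
        apply Summable.tsum_le_tsum h1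
          (Summable.of_nonneg_of_le (fun k => norm_nonneg _) h1 (mlSummable hγ hβ c))
          (mlSummable hγ hβ c)
    _ = mlReal γ β c := rfl

lemma mlReal_measurable {γ β : ℝ} (hγ : 1 < γ) (hβ : 0 < β) :
    Measurable (mlReal γ β) := by
  apply measurable_of_tendsto_metrizable
    (f := fun n x => ∑ k ∈ Finset.range n, x ^ k / Real.Gamma (γ * k + β))
  · intro n
    apply Finset.measurable_sum
    intro k _
    exact (measurable_id.pow_const k).div_const _
  · rw [tendsto_pi_nhds]
    intro x
    exact (mlSummable hγ hβ x).hasSum.tendsto_sum_nat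

lemma betaReal {a b : ℝ} (ha : 0 < a) (hb : 0 < b) :
    ∫ x in (0:ℝ)..1, x ^ (a - 1) * (1 - x) ^ (b - 1)
      = Real.Gamma a * Real.Gamma b / Real.Gamma (a + b) := by
  have hab : Real.Gamma (a + b) ≠ 0 := (Real.Gamma_pos_of_pos (by linarith)).ne'
  have h := Complex.Gamma_mul_Gamma_eq_betaIntegral
    (s := (a : ℂ)) (t := (b : ℂ)) (by simpa using ha) (by simpa using hb)
  rw [Complex.betaIntegral] at h
  have hcong : (∫ x in (0:ℝ)..1, (x : ℂ) ^ ((a : ℂ) - 1) * (1 - (x : ℂ)) ^ ((b : ℂ) - 1))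
      = ((∫ x in (0:ℝ)..1, x ^ (a - 1) * (1 - x) ^ (b - 1) : ℝ) : ℂ) := by
    rw [← intervalIntegral.integral_ofReal]
    apply intervalIntegral.integral_congr
    intro x hx
    rw [Set.uIcc_of_le (by norm_num : (0:ℝ) ≤ 1)] at hx
    obtain ⟨h0, h1⟩ := hx
    simp only [Complex.ofReal_mul]
    rw [Complex.ofReal_cpow h0, Complex.ofReal_cpow (by linarith : (0:ℝ) ≤ 1 - x)]
    push_cast
    ring
  rw [hcong] at h
  have h2 : Complex.Gamma (a : ℂ) * Complex.Gamma (b : ℂ)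
      = ((Real.Gamma a * Real.Gamma b : ℝ) : ℂ) := by
    rw [Complex.Gamma_ofReal, Complex.Gamma_ofReal]; push_cast; ring
  rw [h2] at h
  have h3 : ((a : ℂ) + b) = ((a + b : ℝ) : ℂ) := by push_cast; ring
  rw [h3, Complex.Gamma_ofReal, ← Complex.ofReal_mul] at h
  have := Complex.ofReal_inj.mp h
  field_simp
  linarith [this]

lemma kernIntegrable {p q τ t : ℝ} (hp : -1 < p) (hq : -1 < q) (h : τ < t) :
    IntervalIntegrable (fun s => (t - s) ^ p * (s - τ) ^ q) volume τ t := by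
  set m := (τ + t) / 2 with hm
  have hτm : τ < m := by simp only [hm]; linarith
  have hmt : m < t := by simp only [hm]; linarith
  apply IntervalIntegrable.trans (b := m)
  · -- on [τ, m] : (s-τ)^q integrable, (t-s)^p continuous
    have h1 : IntervalIntegrable (fun s : ℝ => (s - τ) ^ q) volume τ m := by
      have := (intervalIntegrable_rpow' (a := 0) (b := m - τ) hq).comp_sub_right τ
      simpa using this
    have h2 : ContinuousOn (fun s : ℝ => (t - s) ^ p) (Set.uIcc τ m) := by
      apply ContinuousOn.rpow_const (by fun_prop)
      intro x hx
      rw [Set.uIcc_of_le hτm.le] at hx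
      left
      have := hx.2
      intro hc
      nlinarith [hx.2]
    have := h1.mul_continuousOn h2
    simpa [mul_comm] using this
  · -- on [m, t] : (t-s)^p integrable, (s-τ)^q continuous
    have h1 : IntervalIntegrable (fun s : ℝ => (t - s) ^ p) volume m t := by
      have := (intervalIntegrable_rpow' (a := t - m) (b := 0) hp).comp_sub_left t
      simpa using this
    have h2 : ContinuousOn (fun s : ℝ => (s - τ) ^ q) (Set.uIcc m t) := by
      apply ContinuousOn.rpow_const (by fun_prop)
      intro x hx
      rw [Set.uIcc_of_le hmt.le] at hx
      left
      intro hc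
      nlinarith [hx.1]
    exact h1.mul_continuousOn h2

lemma betaConv {a b τ t : ℝ} (ha : 0 < a) (hb : 0 < b) (h : τ < t) :
    ∫ s in τ..t, (t - s) ^ (a - 1) * (s - τ) ^ (b - 1)
      = Real.Gamma a * Real.Gamma b / Real.Gamma (a + b) * (t - τ) ^ (a + b - 1) := by
  set T := t - τ with hT
  have hT0 : 0 < T := by simp [hT]; linarith
  have step1 : (∫ s in τ..t, (t - s) ^ (a - 1) * (s - τ) ^ (b - 1))
      = ∫ u in (0:ℝ)..T, (T - u) ^ (a - 1) * u ^ (b - 1) := by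
    have := intervalIntegral.integral_comp_add_right
      (f := fun s => (t - s) ^ (a - 1) * (s - τ) ^ (b - 1)) (a := 0) (b := T) τ
    rw [zero_add] at this
    have hTt : T + τ = t := by simp [hT]
    rw [hTt] at this
    rw [← this]
    apply intervalIntegral.integral_congr
    intro u _
    dsimp only
    have e : t - (u + τ) = T - u := by simp [hT]; ring
    rw [e, add_sub_cancel_right]
  have step2 : (∫ u in (0:ℝ)..T, (T - u) ^ (a - 1) * u ^ (b - 1))
      = T • ∫ x in (0:ℝ)..1, (T - T * x) ^ (a - 1) * (T * x) ^ (b - 1) := by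
    rw [intervalIntegral.smul_integral_comp_mul_left
      (f := fun u => (T - u) ^ (a - 1) * u ^ (b - 1)) (c := T)]
    norm_num
  have step3 : (∫ x in (0:ℝ)..1, (T - T * x) ^ (a - 1) * (T * x) ^ (b - 1))
      = T ^ (a - 1) * T ^ (b - 1) * ∫ x in (0:ℝ)..1, x ^ (b - 1) * (1 - x) ^ (a - 1) := by
    rw [← intervalIntegral.integral_const_mul]
    apply intervalIntegral.integral_congr
    intro x hx
    rw [Set.uIcc_of_le (by norm_num : (0:ℝ) ≤ 1)] at hx
    obtain ⟨h0, h1⟩ := hx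
    dsimp only
    have e1 : T - T * x = T * (1 - x) := by ring
    rw [e1, Real.mul_rpow hT0.le (by linarith), Real.mul_rpow hT0.le h0]
    ring
  rw [step1, step2, step3, betaReal hb ha]
  rw [smul_eq_mul]
  have : T * (T ^ (a - 1) * T ^ (b - 1)) = T ^ (a + b - 1) := by
    rw [← Real.rpow_add hT0 (a - 1) (b - 1)]
    nth_rewrite 1 [← Real.rpow_one T]
    rw [← Real.rpow_add hT0 1 (a - 1 + (b - 1))]
    congr 1
    ring
  rw [← mul_assoc, this]
  ring

lemma mlKernel {γ lam : ℝ} (hγ1 : 1 < γ) (hγ2 : γ < 2) (hlam : 0 ≤ lam) {τ t : ℝ}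
    (hτ : τ < t) :
    (∫ s in τ..t, (t - s) ^ (1 - γ) * ((s - τ) ^ (γ - 2) * mlReal γ (γ - 1) (-lam * (s - τ) ^ γ)))
      = Real.Gamma (2 - γ) * mlReal γ 1 (-lam * (t - τ) ^ γ) := by
  have hT0 : 0 < t - τ := by linarith
  have hγk : ∀ k : ℕ, (0:ℝ) ≤ γ * k := fun k => mul_nonneg (by linarith) (Nat.cast_nonneg k)
  have hΓb : ∀ k : ℕ, 0 < Real.Gamma (γ * k + (γ - 1)) := fun k =>
    Real.Gamma_pos_of_pos (by linarith [hγk k])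
  have hΓc : ∀ k : ℕ, 0 < Real.Gamma (γ * k + 1) := fun k =>
    Real.Gamma_pos_of_pos (by linarith [hγk k])
  have halg : ∀ (a b c d e : ℝ), b ≠ 0 → c ≠ 0 → a / b * (d * b / c * e) = d * (a * e / c) := by
    intros a b c d e hb hc
    field_simp
  set μ := volume.restrict (Set.Ioc τ t) with hμ
  set F : ℕ → ℝ → ℝ := fun k s =>
    ((-lam) ^ k / Real.Gamma (γ * k + (γ - 1)))
      * ((t - s) ^ (1 - γ) * (s - τ) ^ (γ * k + γ - 2)) with hF
  have hint : ∀ k : ℕ, IntervalIntegrable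
      (fun s => (t - s) ^ (1 - γ) * (s - τ) ^ (γ * (k:ℝ) + γ - 2)) volume τ t := fun k =>
    kernIntegrable (by linarith) (by linarith [hγk k]) hτ
  have hFint : ∀ k, Integrable (F k) μ := by
    intro k
    apply Integrable.const_mul
    exact (intervalIntegrable_iff_integrableOn_Ioc_of_le hτ.le).mp (hint k)
  have hβc : ∀ k : ℕ, (∫ s in τ..t, (t - s) ^ (1 - γ) * (s - τ) ^ (γ * (k:ℝ) + γ - 2))
      = Real.Gamma (2 - γ) * Real.Gamma (γ * k + (γ - 1)) / Real.Gamma (γ * k + 1)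
        * (t - τ) ^ (γ * (k:ℝ)) := by
    intro k
    have h := betaConv (a := 2 - γ) (b := γ * (k:ℝ) + γ - 1) (by linarith)
      (by linarith [hγk k]) hτ
    rw [show (2 - γ) - 1 = 1 - γ from by ring,
      show γ * (k:ℝ) + γ - 1 - 1 = γ * (k:ℝ) + γ - 2 from by ring,
      show (2 - γ) + (γ * (k:ℝ) + γ - 1) = γ * (k:ℝ) + 1 from by ring,
      show γ * (k:ℝ) + 1 - 1 = γ * (k:ℝ) from by ring,
      show γ * (k:ℝ) + γ - 1 = γ * (k:ℝ) + (γ - 1) from by ring] at h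
    exact h
  have hkernnn : ∀ k : ℕ, ∀ s ∈ Set.Ioc τ t,
      0 ≤ (t - s) ^ (1 - γ) * (s - τ) ^ (γ * (k:ℝ) + γ - 2) := by
    intro k s hs
    apply mul_nonneg (Real.rpow_nonneg (by linarith [hs.2]) _)
      (Real.rpow_nonneg (by linarith [hs.1]) _)
  have hnorm : ∀ k : ℕ, (∫ s, ‖F k s‖ ∂μ)
      = Real.Gamma (2 - γ) * ((lam * (t - τ) ^ γ) ^ k / Real.Gamma (γ * k + 1)) := by
    intro k
    have hcongr : ∀ s ∈ Set.Ioc τ t, ‖F k s‖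
        = (lam ^ k / Real.Gamma (γ * k + (γ - 1)))
          * ((t - s) ^ (1 - γ) * (s - τ) ^ (γ * (k:ℝ) + γ - 2)) := by
      intro s hs
      rw [hF]
      dsimp only
      rw [norm_mul, Real.norm_eq_abs, Real.norm_eq_abs, abs_of_nonneg (hkernnn k s hs),
        abs_div, abs_pow, abs_neg, abs_of_nonneg hlam, abs_of_pos (hΓb k)]
    rw [hμ, setIntegral_congr_fun measurableSet_Ioc hcongr, MeasureTheory.integral_const_mul,
      ← intervalIntegral.integral_of_le hτ.le, hβc k]
    have hTk : (t - τ) ^ (γ * (k:ℝ)) = ((t - τ) ^ γ) ^ k := by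
      rw [← Real.rpow_natCast ((t - τ) ^ γ) k, ← Real.rpow_mul hT0.le]
    rw [hTk, mul_pow]
    exact halg _ _ _ _ _ (hΓb k).ne' (hΓc k).ne'
  have hsum : Summable (fun k => ∫ s, ‖F k s‖ ∂μ) := by
    apply Summable.congr _ (fun k => (hnorm k).symm)
    exact ((mlSummable hγ1 one_pos (lam * (t - τ) ^ γ)).mul_left _)
  have hswap := MeasureTheory.integral_tsum_of_summable_integral_norm hFint hsum
  have hcong2 : ∀ s ∈ Set.Ioc τ t, (∑' k, F k s)
      = (t - s) ^ (1 - γ) * ((s - τ) ^ (γ - 2) * mlReal γ (γ - 1) (-lam * (s - τ) ^ γ)) := by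
    intro s hs
    have hsτ : 0 < s - τ := by linarith [hs.1]
    rw [mlReal, ← tsum_mul_left, ← tsum_mul_left]
    apply tsum_congr
    intro k
    rw [hF]
    dsimp only
    rw [mul_pow, ← Real.rpow_natCast ((s - τ) ^ γ) k, ← Real.rpow_mul hsτ.le,
      show (t - s) ^ (1 - γ) * ((s - τ) ^ (γ - 2) * ((-lam) ^ k * (s - τ) ^ (γ * (k:ℝ))
        / Real.Gamma (γ * k + (γ - 1))))
        = ((-lam) ^ k / Real.Gamma (γ * k + (γ - 1)))
          * ((t - s) ^ (1 - γ) * ((s - τ) ^ (γ - 2) * (s - τ) ^ (γ * (k:ℝ)))) from by ring,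
      ← Real.rpow_add hsτ, show γ - 2 + γ * (k:ℝ) = γ * (k:ℝ) + γ - 2 from by ring]
  have lhs_eq : (∫ s in τ..t, (t - s) ^ (1 - γ)
        * ((s - τ) ^ (γ - 2) * mlReal γ (γ - 1) (-lam * (s - τ) ^ γ)))
      = ∫ s, (∑' k, F k s) ∂μ := by
    rw [intervalIntegral.integral_of_le hτ.le, hμ]
    exact (setIntegral_congr_fun measurableSet_Ioc hcong2).symm
  rw [lhs_eq, ← hswap]
  have hterm : ∀ k : ℕ, (∫ s, F k s ∂μ)
      = Real.Gamma (2 - γ) * ((-lam * (t - τ) ^ γ) ^ k / Real.Gamma (γ * k + 1)) := by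
    intro k
    rw [hF]
    dsimp only
    rw [MeasureTheory.integral_const_mul, hμ, ← intervalIntegral.integral_of_le hτ.le, hβc k]
    have hTk : (t - τ) ^ (γ * (k:ℝ)) = ((t - τ) ^ γ) ^ k := by
      rw [← Real.rpow_natCast ((t - τ) ^ γ) k, ← Real.rpow_mul hT0.le]
    rw [hTk, mul_pow]
    exact halg _ _ _ _ _ (hΓb k).ne' (hΓc k).ne'
  rw [tsum_congr hterm, tsum_mul_left, mlReal]


/-- The identity
`(1/Γ(2-γ₁)) ∫₀^t (t-s)^{1-γ₁} ∫₀^s (s-τ)^{γ₁-2} E_{γ₁,γ₁-1}(-λ(s-τ)^{γ₁}) g(τ) dτ ds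
  = ∫₀^t E_{γ₁,1}(-λ(t-s)^{γ₁}) g(s) ds`. -/
theorem stmt3 (γ₁ lam : ℝ) (hγ1 : 1 < γ₁) (hγ2 : γ₁ < 2) (hlam : 0 ≤ lam)
    (g : ℝ → ℝ) (hg : Continuous g) (hgb : ∃ M, ∀ x, |g x| ≤ M)
    (t : ℝ) (ht : 0 < t) :
    (1 / Real.Gamma (2 - γ₁)) *
        ∫ s in (0:ℝ)..t, (t - s) ^ (1 - γ₁) *
          ∫ τ in (0:ℝ)..s,
            (s - τ) ^ (γ₁ - 2) * mlReal γ₁ (γ₁ - 1) (-lam * (s - τ) ^ γ₁) * g τ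
      = ∫ s in (0:ℝ)..t, mlReal γ₁ 1 (-lam * (t - s) ^ γ₁) * g s := by
  obtain ⟨M, hM⟩ := hgb
  have hM0 : 0 ≤ M := (abs_nonneg _).trans (hM 0)
  have hβ : (0:ℝ) < γ₁ - 1 := by linarith
  have hΓ2 : 0 < Real.Gamma (2 - γ₁) := Real.Gamma_pos_of_pos (by linarith)
  have hml : Measurable (mlReal γ₁ (γ₁ - 1)) := mlReal_measurable hγ1 hβ
  set M₁ := mlReal γ₁ (γ₁ - 1) (lam * t ^ γ₁) with hM₁def
  have hM₁0 : 0 ≤ M₁ := mlReal_nonneg (by linarith) hβ (by positivity)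
  have hmlb : ∀ u : ℝ, 0 ≤ u → u ≤ t → |mlReal γ₁ (γ₁ - 1) (-lam * u ^ γ₁)| ≤ M₁ := by
    intro u hu hut
    apply mlReal_abs_le hγ1 hβ
    rw [abs_mul, abs_neg, abs_of_nonneg hlam, abs_of_nonneg (Real.rpow_nonneg hu _)]
    exact mul_le_mul_of_nonneg_left (Real.rpow_le_rpow hu hut (by linarith)) hlam
  set ν := volume.restrict (Set.Ioc (0:ℝ) t) with hνdef
  set Φ : ℝ × ℝ → ℝ := fun p =>
    (t - p.1) ^ (1 - γ₁) *
      ((p.1 - p.2) ^ (γ₁ - 2) * mlReal γ₁ (γ₁ - 1) (-lam * (p.1 - p.2) ^ γ₁) * g p.2)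
    with hΦdef
  set S : Set (ℝ × ℝ) := {p | p.2 ≤ p.1} with hSdef
  have hSm : MeasurableSet S := measurableSet_le measurable_snd measurable_fst
  have hΦm : Measurable Φ := by
    have h1 : Measurable fun p : ℝ × ℝ => (t - p.1) ^ (1 - γ₁) :=
      (measurable_const.sub measurable_fst).pow measurable_const
    have h2 : Measurable fun p : ℝ × ℝ => (p.1 - p.2) ^ (γ₁ - 2) :=
      (measurable_fst.sub measurable_snd).pow measurable_const
    have h3 : Measurable fun p : ℝ × ℝ => mlReal γ₁ (γ₁ - 1) (-lam * (p.1 - p.2) ^ γ₁) :=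
      hml.comp (measurable_const.mul ((measurable_fst.sub measurable_snd).pow measurable_const))
    have h4 : Measurable fun p : ℝ × ℝ => g p.2 := hg.measurable.comp measurable_snd
    exact h1.mul ((h2.mul h3).mul h4)
  set H := S.indicator Φ with hHdef
  have hHm : Measurable H := hΦm.indicator hSm
  -- slicing in τ
  have e1 : ∀ s : ℝ, (fun τ => H (s, τ)) = (Set.Iic s).indicator (fun τ => Φ (s, τ)) := by
    intro s
    funext τ
    by_cases h : τ ≤ s <;>
      simp [hHdef, hSdef, Set.indicator_apply, h]
  have hIocIic : ∀ s ∈ Set.Ioc (0:ℝ) t, Set.Iic s ∩ Set.Ioc 0 t = Set.Ioc 0 s := by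
    intro s hs
    ext τ
    simp only [Set.mem_inter_iff, Set.mem_Iic, Set.mem_Ioc]
    constructor
    · rintro ⟨h1, h2, h3⟩; exact ⟨h2, h1⟩
    · rintro ⟨h1, h2⟩; exact ⟨h2, h1, h2.trans hs.2⟩
  -- integrability of slices in τ
  have key0 : ∀ s ∈ Set.Ioc (0:ℝ) t, Integrable (fun τ => Φ (s, τ)) (volume.restrict (Set.Ioc 0 s)) := by
    intro s hs
    have k1 : Integrable (fun τ => (s - τ) ^ (γ₁ - 2)) (volume.restrict (Set.Ioc 0 s)) := by
      have := ((intervalIntegrable_rpow' (a := 0) (b := s) (by linarith : (-1:ℝ) < γ₁ - 2)).comp_sub_left s).symm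
      rw [sub_zero, sub_self] at this
      exact (intervalIntegrable_iff_integrableOn_Ioc_of_le hs.1.le).mp this
    have k2 : Integrable (fun τ =>
        (mlReal γ₁ (γ₁ - 1) (-lam * (s - τ) ^ γ₁) * g τ) * (s - τ) ^ (γ₁ - 2))
        (volume.restrict (Set.Ioc 0 s)) := by
      apply Integrable.bdd_mul (c := M₁ * M) k1
      · exact ((hml.comp (measurable_const.mul
          ((measurable_const.sub measurable_id).pow measurable_const))).mul
          hg.measurable).aestronglyMeasurable
      · filter_upwards [ae_restrict_mem measurableSet_Ioc] with τ hτ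
        rw [norm_mul, Real.norm_eq_abs, Real.norm_eq_abs]
        exact mul_le_mul (hmlb (s - τ) (by linarith [hτ.2]) (by linarith [hτ.1, hs.2]))
          (hM τ) (abs_nonneg _) hM₁0
    have k3 : Integrable (fun τ => Φ (s, τ)) (volume.restrict (Set.Ioc 0 s)) := by
      apply (k2.const_mul ((t - s) ^ (1 - γ₁))).congr
      apply Filter.Eventually.of_forall
      intro τ
      dsimp only [hΦdef]
      ring
    exact k3
  have key0' : ∀ s ∈ Set.Ioc (0:ℝ) t, Integrable (fun τ => H (s, τ)) ν := by
    intro s hs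
    rw [e1 s, hνdef]
    rw [integrable_indicator_iff measurableSet_Iic]
    rw [MeasureTheory.IntegrableOn, Measure.restrict_restrict measurableSet_Iic, hIocIic s hs]
    exact key0 s hs
  -- kernel integral in τ
  have hkint : ∀ s : ℝ, 0 < s → s ≤ t →
      (∫ τ in Set.Ioc (0:ℝ) s, (s - τ) ^ (γ₁ - 2)) = s ^ (γ₁ - 1) / (γ₁ - 1) := by
    intro s hs0 hst
    rw [← intervalIntegral.integral_of_le hs0.le]
    rw [intervalIntegral.integral_comp_sub_left (fun u => u ^ (γ₁ - 2)) s]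
    rw [sub_zero, sub_self]
    rw [integral_rpow (Or.inl (by linarith))]
    rw [Real.zero_rpow (by linarith : γ₁ - 2 + 1 ≠ 0)]
    norm_num
    ring_nf
  -- norm of Φ on the triangle
  have hΦnorm : ∀ s ∈ Set.Ioc (0:ℝ) t, ∀ τ ∈ Set.Ioc (0:ℝ) s,
      ‖Φ (s, τ)‖ ≤ (t - s) ^ (1 - γ₁) * (M₁ * M) * (s - τ) ^ (γ₁ - 2) := by
    intro s hs τ hτ
    have h1 : (0:ℝ) ≤ (t - s) ^ (1 - γ₁) := Real.rpow_nonneg (by linarith [hs.2]) _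
    have h2 : (0:ℝ) ≤ (s - τ) ^ (γ₁ - 2) := Real.rpow_nonneg (by linarith [hτ.2]) _
    rw [Real.norm_eq_abs, hΦdef]
    dsimp only
    rw [abs_mul, abs_mul, abs_mul, abs_of_nonneg h1, abs_of_nonneg h2]
    have h3 := hmlb (s - τ) (by linarith [hτ.2]) (by linarith [hτ.1, hs.2])
    have h4 := hM τ
    have h5 : |mlReal γ₁ (γ₁ - 1) (-lam * (s - τ) ^ γ₁)| * |g τ| ≤ M₁ * M :=
      mul_le_mul h3 h4 (abs_nonneg _) hM₁0
    calc (t - s) ^ (1 - γ₁) * ((s - τ) ^ (γ₁ - 2)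
          * |mlReal γ₁ (γ₁ - 1) (-lam * (s - τ) ^ γ₁)| * |g τ|)
        = (t - s) ^ (1 - γ₁) * (s - τ) ^ (γ₁ - 2)
          * (|mlReal γ₁ (γ₁ - 1) (-lam * (s - τ) ^ γ₁)| * |g τ|) := by ring
      _ ≤ (t - s) ^ (1 - γ₁) * (s - τ) ^ (γ₁ - 2) * (M₁ * M) := by
          apply mul_le_mul_of_nonneg_left h5 (mul_nonneg h1 h2)
      _ = (t - s) ^ (1 - γ₁) * (M₁ * M) * (s - τ) ^ (γ₁ - 2) := by ring
  -- product integrability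
  have hprod : Integrable H (ν.prod ν) := by
    rw [integrable_prod_iff hHm.aestronglyMeasurable]
    constructor
    · rw [hνdef]
      filter_upwards [ae_restrict_mem measurableSet_Ioc] with s hs
      exact key0' s hs
    · apply Integrable.mono'
        (g := fun s => M₁ * M * (t ^ (γ₁ - 1) / (γ₁ - 1)) * (t - s) ^ (1 - γ₁))
      · -- integrable bound
        have hb : Integrable (fun s : ℝ => (t - s) ^ (1 - γ₁)) ν := by
          have := ((intervalIntegrable_rpow' (a := 0) (b := t)
            (by linarith : (-1:ℝ) < 1 - γ₁)).comp_sub_left t).symm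
          rw [sub_zero, sub_self] at this
          rw [hνdef]
          exact (intervalIntegrable_iff_integrableOn_Ioc_of_le ht.le).mp this
        exact hb.const_mul _
      · exact (hHm.norm.aestronglyMeasurable (μ := ν.prod ν)).integral_prod_right'
      · rw [hνdef]
        filter_upwards [ae_restrict_mem measurableSet_Ioc] with s hs
        rw [Real.norm_eq_abs, abs_of_nonneg (integral_nonneg (fun τ => norm_nonneg _))]
        have hIH : Integrable (fun τ => Φ (s, τ)) (volume.restrict (Set.Ioc 0 s)) := key0 s hs
        have e2 : (∫ τ, ‖H (s, τ)‖ ∂(volume.restrict (Set.Ioc 0 t)))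
            = ∫ τ in Set.Ioc (0:ℝ) s, ‖Φ (s, τ)‖ := by
          have : (fun τ => ‖H (s, τ)‖)
              = (Set.Iic s).indicator (fun τ => ‖Φ (s, τ)‖) := by
            rw [show (fun τ => ‖H (s, τ)‖) = fun τ => ‖(fun τ' => H (s, τ')) τ‖ from rfl]
            rw [e1 s]
            funext τ
            by_cases h : τ ≤ s <;> simp [Set.indicator_apply, h]
          rw [this, MeasureTheory.integral_indicator measurableSet_Iic,
            Measure.restrict_restrict measurableSet_Iic, hIocIic s hs]
        rw [e2]
        have hkern : Integrable (fun τ => (t - s) ^ (1 - γ₁) * (M₁ * M) * (s - τ) ^ (γ₁ - 2))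
            (volume.restrict (Set.Ioc 0 s)) := by
          apply Integrable.const_mul
          have := ((intervalIntegrable_rpow' (a := 0) (b := s)
            (by linarith : (-1:ℝ) < γ₁ - 2)).comp_sub_left s).symm
          rw [sub_zero, sub_self] at this
          exact (intervalIntegrable_iff_integrableOn_Ioc_of_le hs.1.le).mp this
        calc (∫ τ in Set.Ioc (0:ℝ) s, ‖Φ (s, τ)‖)
            ≤ ∫ τ in Set.Ioc (0:ℝ) s, (t - s) ^ (1 - γ₁) * (M₁ * M) * (s - τ) ^ (γ₁ - 2) := by
              apply setIntegral_mono_on hIH.norm hkern measurableSet_Ioc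
              exact fun τ hτ => hΦnorm s hs τ hτ
          _ = (t - s) ^ (1 - γ₁) * (M₁ * M) * (s ^ (γ₁ - 1) / (γ₁ - 1)) := by
              rw [MeasureTheory.integral_const_mul, hkint s hs.1 hs.2]
          _ ≤ M₁ * M * (t ^ (γ₁ - 1) / (γ₁ - 1)) * (t - s) ^ (1 - γ₁) := by
              have h1 : (0:ℝ) ≤ (t - s) ^ (1 - γ₁) := Real.rpow_nonneg (by linarith [hs.2]) _
              have h2 : s ^ (γ₁ - 1) ≤ t ^ (γ₁ - 1) :=
                Real.rpow_le_rpow hs.1.le hs.2 (by linarith)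
              have h3 : s ^ (γ₁ - 1) / (γ₁ - 1) ≤ t ^ (γ₁ - 1) / (γ₁ - 1) := by
                rw [div_le_div_iff₀ hβ hβ]
                nlinarith [h2, hβ]
              have h4 := mul_le_mul_of_nonneg_left h3
                (mul_nonneg (mul_nonneg hM₁0 hM0) h1)
              nlinarith [h4]
  -- Fubini
  have hswap := MeasureTheory.integral_integral_swap (f := fun s τ => H (s, τ))
    (μ := ν) (ν := ν) hprod
  -- inner identity in s-form
  have hinner : ∀ s ∈ Set.Ioc (0:ℝ) t,
      (∫ τ, H (s, τ) ∂ν) = (t - s) ^ (1 - γ₁) *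
        ∫ τ in (0:ℝ)..s, (s - τ) ^ (γ₁ - 2) * mlReal γ₁ (γ₁ - 1) (-lam * (s - τ) ^ γ₁) * g τ := by
    intro s hs
    rw [show (∫ τ, H (s, τ) ∂ν) = ∫ τ, (fun τ' => H (s, τ')) τ ∂ν from rfl, e1 s, hνdef,
      MeasureTheory.integral_indicator measurableSet_Iic,
      Measure.restrict_restrict measurableSet_Iic, hIocIic s hs,
      ← intervalIntegral.integral_of_le hs.1.le,
      ← intervalIntegral.integral_const_mul]
  -- outer identity in τ-form
  have hout : ∀ τ ∈ Set.Ioo (0:ℝ) t, (∫ s, H (s, τ) ∂ν)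
      = Real.Gamma (2 - γ₁) * (mlReal γ₁ 1 (-lam * (t - τ) ^ γ₁) * g τ) := by
    intro τ hτ
    have e2 : (fun s => H (s, τ)) = (Set.Ici τ).indicator (fun s => Φ (s, τ)) := by
      funext s
      by_cases h : τ ≤ s <;> simp [hHdef, hSdef, Set.indicator_apply, h]
    have hIci : Set.Ici τ ∩ Set.Ioc 0 t = Set.Icc τ t := by
      ext s
      simp only [Set.mem_inter_iff, Set.mem_Ici, Set.mem_Ioc, Set.mem_Icc]
      constructor
      · rintro ⟨h1, h2, h3⟩; exact ⟨h1, h3⟩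
      · rintro ⟨h1, h2⟩; exact ⟨h1, lt_of_lt_of_le hτ.1 h1, h2⟩
    rw [e2, hνdef, MeasureTheory.integral_indicator measurableSet_Ici,
      Measure.restrict_restrict measurableSet_Ici, hIci,
      MeasureTheory.integral_Icc_eq_integral_Ioc,
      ← intervalIntegral.integral_of_le hτ.2.le]
    rw [intervalIntegral.integral_congr (g := fun s =>
      ((t - s) ^ (1 - γ₁) * ((s - τ) ^ (γ₁ - 2) * mlReal γ₁ (γ₁ - 1) (-lam * (s - τ) ^ γ₁)))
        * g τ) (fun s _ => by dsimp only [hΦdef]; ring)]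
    rw [intervalIntegral.integral_mul_const, mlKernel hγ1 hγ2 hlam hτ.2]
    ring
  -- assemble
  have L1 : (∫ s in (0:ℝ)..t, (t - s) ^ (1 - γ₁) *
        ∫ τ in (0:ℝ)..s, (s - τ) ^ (γ₁ - 2) * mlReal γ₁ (γ₁ - 1) (-lam * (s - τ) ^ γ₁) * g τ)
      = ∫ s, (∫ τ, H (s, τ) ∂ν) ∂ν := by
    rw [intervalIntegral.integral_of_le ht.le]
    rw [hνdef]
    apply setIntegral_congr_fun measurableSet_Ioc
    intro s hs
    exact (hinner s hs).symm
  rw [L1, hswap]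
  have L2 : (∫ τ, (∫ s, H (s, τ) ∂ν) ∂ν)
      = ∫ τ in Set.Ioc (0:ℝ) t,
          Real.Gamma (2 - γ₁) * (mlReal γ₁ 1 (-lam * (t - τ) ^ γ₁) * g τ) := by
    rw [hνdef]
    apply setIntegral_congr_ae measurableSet_Ioc
    have hne : ∀ᵐ τ : ℝ ∂volume, τ ∉ ({t} : Set ℝ) :=
      measure_eq_zero_iff_ae_notMem.mp (measure_singleton t)
    filter_upwards [hne] with τ hτt hτ
    exact hout τ ⟨hτ.1, lt_of_le_of_ne hτ.2 (fun h => hτt (by simp [h]))⟩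
  rw [L2, MeasureTheory.integral_const_mul, ← mul_assoc, one_div_mul_cancel hΓ2.ne', one_mul,
    intervalIntegral.integral_of_le ht.le]
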